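/- If ω₁ < 𝔠 (the negation of the Continuum Hypothesis), then the usco multimap P⁻¹ : [0,1]² ⊸ Ï² has no Borel-measurable selection, where P : Ï² → [0,1]² is the square of the projection p : Ï → [0,1] of the split interval onto the unit interval. -/

import Mathlib

/-- The split interval: `[0,1] × {0,1}` with the lexicographic order. -/
abbrev SplitInterval : Type := Set.Icc (0:ℝ) 1 ×ₗ Bool

instance : TopologicalSpace SplitInterval := Preorder.topology SplitInterval

instance : OrderTopology SplitInterval := ⟨rfl⟩

/-- The projection `⟨x,i⟩ ↦ x` of the split interval onto the unit interval. -/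
def splitProj : SplitInterval → Set.Icc (0:ℝ) 1 := fun a => (ofLex a).1

/-- The square `P = p × p` of the projection `p`. -/
def splitProjSq : SplitInterval × SplitInterval → Set.Icc (0:ℝ) 1 × Set.Icc (0:ℝ) 1 :=
  fun z => (splitProj z.1, splitProj z.2)

open Set Cardinal

/-- Cardinality bound for the Borel σ-algebra of the reals. -/
lemma borelCardReal : #{T : Set ℝ // MeasurableSet T} ≤ 𝔠 := by
  have h : Real.measurableSpace = MeasurableSpace.generateFrom (Set.range Set.Iio) :=
    borel_eq_generateFrom_Iio ℝ
  have h2 : #{T : Set ℝ | @MeasurableSet ℝ (.generateFrom (Set.range Set.Iio)) T} ≤ 𝔠 :=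
    MeasurableSpace.cardinal_measurableSet_le_continuum ((mk_range_le).trans mk_real.le)
  simp only [MeasurableSet] at h2 ⊢
  rw [h]
  exact h2

/-- A set of reals all of whose "traces" `S ∩ E` are Borel is countable. -/
lemma countable_of_all_inter_measurable {E : Set ℝ}
    (hB : ∀ S : Set ℝ, MeasurableSet (S ∩ E)) : E.Countable := by
  by_contra hc
  have hEm : MeasurableSet E := by simpa using hB univ
  haveI : StandardBorelSpace E := hEm.standardBorel
  have hne : ¬ Countable E := by rwa [Set.countable_coe_iff]
  have hcard : 𝔠 ≤ #E := by
    have e := PolishSpace.measurableEquivNatBoolOfNotCountable (α := E) hne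
    have h1 : #E = #(ℕ → Bool) := Cardinal.mk_congr e.toEquiv
    rw [h1, Cardinal.mk_arrow]
    simp [Cardinal.two_power_aleph0]
  have hpow : #(Set E) ≤ #{T : Set ℝ // MeasurableSet T} := by
    refine Cardinal.mk_le_of_injective (f := fun A : Set E =>
      (⟨Subtype.val '' A, ?_⟩ : {T : Set ℝ // MeasurableSet T})) ?_
    · have := hB (Subtype.val '' A)
      rwa [inter_eq_left.mpr (by rintro x ⟨y, -, rfl⟩; exact y.2)] at this
    · intro A B hAB
      simpa using congrArg Subtype.val hAB
  have hcon : 2 ^ (𝔠 : Cardinal) ≤ 𝔠 := by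
    calc (2:Cardinal) ^ (𝔠 : Cardinal) ≤ 2 ^ #E :=
          Cardinal.power_le_power_left (by norm_num) hcard
      _ = #(Set E) := (Cardinal.mk_set).symm
      _ ≤ #{T : Set ℝ // MeasurableSet T} := hpow
      _ ≤ 𝔠 := borelCardReal
  exact absurd hcon (Cardinal.cantor 𝔠).not_ge

/-- Open rays in the split interval determined by a point of `[0,1]` and a boolean. -/
def ray : Bool → Set.Icc (0:ℝ) 1 → Set SplitInterval
  | false, x => Set.Iio (toLex (x, true))
  | true, x => Set.Ioi (toLex (x, false))

lemma isOpen_ray (b : Bool) (x : Set.Icc (0:ℝ) 1) : IsOpen (ray b x) := by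
  cases b
  · exact isOpen_Iio
  · exact isOpen_Ioi

lemma mem_iio_iff (a : SplitInterval) (x : Set.Icc (0:ℝ) 1) :
    a ∈ Set.Iio (toLex (x, true)) ↔
      ((((ofLex a).1 : ℝ) < x) ∨ ((((ofLex a).1 : ℝ) = x) ∧ (ofLex a).2 = false)) := by
  rw [Set.mem_Iio]
  refine Iff.trans (show _ ↔ _ from (Prod.Lex.lt_iff : a < toLex (x, true) ↔ _)) ?_
  constructor
  · rintro (h | ⟨h1, h2⟩)
    · exact Or.inl (Subtype.coe_lt_coe.mpr h)
    · exact Or.inr ⟨congrArg Subtype.val h1, (Bool.lt_iff.mp h2).1⟩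
  · rintro (h | ⟨h1, h2⟩)
    · exact Or.inl (Subtype.coe_lt_coe.mp h)
    · exact Or.inr ⟨Subtype.ext h1, by rw [h2]; exact Bool.lt_iff.mpr ⟨rfl, rfl⟩⟩

lemma mem_ioi_iff (a : SplitInterval) (x : Set.Icc (0:ℝ) 1) :
    a ∈ Set.Ioi (toLex (x, false)) ↔
      (((x : ℝ) < ((ofLex a).1 : ℝ)) ∨ ((((ofLex a).1 : ℝ) = x) ∧ (ofLex a).2 = true)) := by
  rw [Set.mem_Ioi]
  refine Iff.trans (show _ ↔ _ from (Prod.Lex.lt_iff : toLex (x, false) < a ↔ _)) ?_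
  constructor
  · rintro (h | ⟨h1, h2⟩)
    · exact Or.inl (Subtype.coe_lt_coe.mpr h)
    · exact Or.inr ⟨(congrArg Subtype.val h1).symm, (Bool.lt_iff.mp h2).2⟩
  · rintro (h | ⟨h1, h2⟩)
    · exact Or.inl (Subtype.coe_lt_coe.mp h)
    · exact Or.inr ⟨Subtype.ext h1.symm, by rw [h2]; exact Bool.lt_iff.mpr ⟨rfl, rfl⟩⟩

lemma mem_ray {a : SplitInterval} {b : Bool} {x : Set.Icc (0:ℝ) 1} :
    a ∈ ray b x ↔
      ((cond b ((x : ℝ) < ((ofLex a).1 : ℝ)) (((ofLex a).1 : ℝ) < x)) ∨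
        ((((ofLex a).1 : ℝ) = x) ∧ (ofLex a).2 = b)) := by
  cases b
  · exact mem_iio_iff a x
  · exact mem_ioi_iff a x

/-- Core extraction lemma: along a suitably "monotone" Borel curve, the set of
parameters where the selection takes the boolean pattern `(b₁, b₂)` is countable. -/
lemma core_countable
    (s : Set.Icc (0:ℝ) 1 × Set.Icc (0:ℝ) 1 → SplitInterval × SplitInterval)
    (hsel : ∀ z, splitProjSq (s z) = z)
    (hmeas : ∀ U : Set (SplitInterval × SplitInterval), IsOpen U → MeasurableSet (s ⁻¹' U))
    (γ : ℝ → Set.Icc (0:ℝ) 1 × Set.Icc (0:ℝ) 1) (hγ : Measurable γ)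
    (J : Set ℝ) (hJ : MeasurableSet J) (b₁ b₂ : Bool)
    (hcf : ∀ t ∈ J, ∀ t' ∈ J, t ≠ t' →
      ¬ ((cond b₁ (((γ t').1 : ℝ) < ((γ t).1 : ℝ)) (((γ t).1 : ℝ) < ((γ t').1 : ℝ))) ∧
         (cond b₂ (((γ t').2 : ℝ) < ((γ t).2 : ℝ)) (((γ t).2 : ℝ) < ((γ t').2 : ℝ)))))
    (hx : ∀ t ∈ J, ∀ t' ∈ J, t ≠ t' → ((γ t).1 : ℝ) ≠ ((γ t').1 : ℝ))
    (hy : ∀ t ∈ J, ∀ t' ∈ J, t ≠ t' → ((γ t).2 : ℝ) ≠ ((γ t').2 : ℝ)) :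
    {t | t ∈ J ∧ (ofLex (s (γ t)).1).2 = b₁ ∧ (ofLex (s (γ t)).2).2 = b₂}.Countable := by
  set E := {t | t ∈ J ∧ (ofLex (s (γ t)).1).2 = b₁ ∧ (ofLex (s (γ t)).2).2 = b₂} with hE
  have hproj1 : ∀ z, ((ofLex (s z).1).1 : ℝ) = (z.1 : ℝ) := fun z =>
    congrArg (fun w => (w.1 : ℝ)) (hsel z)
  have hproj2 : ∀ z, ((ofLex (s z).2).1 : ℝ) = (z.2 : ℝ) := fun z =>
    congrArg (fun w => (w.2 : ℝ)) (hsel z)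
  have hkey : ∀ S : Set ℝ,
      γ ⁻¹' (s ⁻¹' (⋃ t₀ ∈ S ∩ E, ray b₁ (γ t₀).1 ×ˢ ray b₂ (γ t₀).2)) ∩ J = S ∩ E := by
    intro S
    ext t
    simp only [Set.mem_inter_iff, Set.mem_preimage, Set.mem_iUnion, Set.mem_prod,
      exists_prop]
    constructor
    · rintro ⟨⟨t₀, ⟨ht₀S, ht₀E⟩, hm1, hm2⟩, htJ⟩
      have ht₀J : t₀ ∈ J := ht₀E.1
      rw [mem_ray] at hm1 hm2
      rw [hproj1 (γ t)] at hm1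
      rw [hproj2 (γ t)] at hm2
      by_cases htt : t = t₀
      · subst htt
        refine ⟨ht₀S, htJ, ?_, ?_⟩
        · rcases hm1 with h | h
          · exact absurd h (by cases b₁ <;> simp)
          · exact h.2
        · rcases hm2 with h | h
          · exact absurd h (by cases b₂ <;> simp)
          · exact h.2
      · exfalso
        have hx' := hx t htJ t₀ ht₀J htt
        have hy' := hy t htJ t₀ ht₀J htt
        have hm1' : (cond b₁ (((γ t₀).1 : ℝ) < ((γ t).1 : ℝ))
            (((γ t).1 : ℝ) < ((γ t₀).1 : ℝ))) := by
          rcases hm1 with h | h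
          · exact h
          · exact absurd h.1 hx'
        have hm2' : (cond b₂ (((γ t₀).2 : ℝ) < ((γ t).2 : ℝ))
            (((γ t).2 : ℝ) < ((γ t₀).2 : ℝ))) := by
          rcases hm2 with h | h
          · exact h
          · exact absurd h.1 hy'
        exact hcf t htJ t₀ ht₀J htt ⟨hm1', hm2'⟩
    · rintro ⟨htS, htJ, hf, hg⟩
      refine ⟨⟨t, ⟨htS, htJ, hf, hg⟩, ?_, ?_⟩, htJ⟩
      · rw [mem_ray]; exact Or.inr ⟨hproj1 (γ t), hf⟩
      · rw [mem_ray]; exact Or.inr ⟨hproj2 (γ t), hg⟩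
  have hB : ∀ S : Set ℝ, MeasurableSet (S ∩ E) := by
    intro S
    rw [← hkey S]
    exact (hγ (hmeas _ (isOpen_biUnion fun t₀ _ =>
      ((isOpen_ray _ _).prod (isOpen_ray _ _))))).inter hJ
  exact countable_of_all_inter_measurable hB

/-- A clamped inclusion `ℝ → [0,1]`. -/
def pt (r : ℝ) : Set.Icc (0:ℝ) 1 :=
  ⟨max 0 (min 1 r), le_max_left _ _, max_le zero_le_one (min_le_left _ _)⟩

lemma pt_coe {r : ℝ} (h0 : 0 ≤ r) (h1 : r ≤ 1) : ((pt r : Set.Icc (0:ℝ) 1) : ℝ) = r := by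
  simp only [pt]
  rw [min_eq_right h1, max_eq_right h0]

lemma measurable_pt : Measurable pt :=
  Measurable.subtype_mk (measurable_const.max (measurable_const.min measurable_id))

/-- If `ω₁ < 𝔠`, then the multimap `P⁻¹ : [0,1]² ⊸ Ï²` has no
Borel-measurable selection. -/
theorem no_borel_selection_of_neg_CH (hch : Cardinal.aleph 1 < Cardinal.continuum) :
    ¬ ∃ s : Set.Icc (0:ℝ) 1 × Set.Icc (0:ℝ) 1 → SplitInterval × SplitInterval,
        (∀ z, splitProjSq (s z) = z) ∧
        ∀ U : Set (SplitInterval × SplitInterval), IsOpen U → MeasurableSet (s ⁻¹' U) := by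
  -- transport the hypothesis to `Cardinal.{0}`
  have hch0 : (Cardinal.aleph 1 : Cardinal.{0}) < Cardinal.continuum := by
    have e1 : Cardinal.lift (Cardinal.aleph 1 : Cardinal.{0}) = Cardinal.aleph 1 := by
      rw [Cardinal.lift_aleph, Ordinal.lift_one]
    exact Cardinal.lift_lt.mp (by rw [e1, Cardinal.lift_continuum]; exact hch)
  rintro ⟨s, hsel, hmeas⟩
  set z : ℝ → ℝ → Set.Icc (0:ℝ) 1 × Set.Icc (0:ℝ) 1 :=
    fun c d => (pt ((d - c) / 2), pt ((d + c) / 2)) with hz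
  have hcoe1 : ∀ c ∈ Icc (0:ℝ) (1/4), ∀ d ∈ Icc (1/2:ℝ) (3/4),
      (((z c d).1 : ℝ)) = (d - c) / 2 := by
    rintro c ⟨hc0, hc1⟩ d ⟨hd0, hd1⟩
    simp only [hz]
    exact pt_coe (by linarith) (by linarith)
  have hcoe2 : ∀ c ∈ Icc (0:ℝ) (1/4), ∀ d ∈ Icc (1/2:ℝ) (3/4),
      (((z c d).2 : ℝ)) = (d + c) / 2 := by
    rintro c ⟨hc0, hc1⟩ d ⟨hd0, hd1⟩
    simp only [hz]
    exact pt_coe (by linarith) (by linarith)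
  -- row claim : along lines of slope 1, mixed boolean patterns are countable
  have hrow : ∀ c ∈ Icc (0:ℝ) (1/4),
      {d | d ∈ Icc (1/2:ℝ) (3/4) ∧
        (ofLex (s (z c d)).1).2 ≠ (ofLex (s (z c d)).2).2}.Countable := by
    intro c hc
    have hγ : Measurable (fun d => z c d) := by
      simp only [hz]
      exact (measurable_pt.comp ((measurable_id.sub_const c).div_const 2)).prodMk
        (measurable_pt.comp ((measurable_id.add_const c).div_const 2))
    have h1 := core_countable s hsel hmeas (fun d => z c d) hγ
      (Icc (1/2:ℝ) (3/4)) measurableSet_Icc false true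
      (by
        intro t ht t' ht' hne
        simp only [Bool.cond_false, Bool.cond_true]
        rw [hcoe1 c hc t ht, hcoe1 c hc t' ht', hcoe2 c hc t ht, hcoe2 c hc t' ht']
        rintro ⟨h1, h2⟩; linarith)
      (by
        intro t ht t' ht' hne
        rw [hcoe1 c hc t ht, hcoe1 c hc t' ht']
        intro h; exact hne (by linarith))
      (by
        intro t ht t' ht' hne
        rw [hcoe2 c hc t ht, hcoe2 c hc t' ht']
        intro h; exact hne (by linarith))
    have h2 := core_countable s hsel hmeas (fun d => z c d) hγ
      (Icc (1/2:ℝ) (3/4)) measurableSet_Icc true false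
      (by
        intro t ht t' ht' hne
        simp only [Bool.cond_false, Bool.cond_true]
        rw [hcoe1 c hc t ht, hcoe1 c hc t' ht', hcoe2 c hc t ht, hcoe2 c hc t' ht']
        rintro ⟨h1, h2⟩; linarith)
      (by
        intro t ht t' ht' hne
        rw [hcoe1 c hc t ht, hcoe1 c hc t' ht']
        intro h; exact hne (by linarith))
      (by
        intro t ht t' ht' hne
        rw [hcoe2 c hc t ht, hcoe2 c hc t' ht']
        intro h; exact hne (by linarith))
    have h1' : {d | d ∈ Icc (1/2:ℝ) (3/4) ∧ (ofLex (s (z c d)).1).2 = false ∧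
        (ofLex (s (z c d)).2).2 = true}.Countable := h1
    have h2' : {d | d ∈ Icc (1/2:ℝ) (3/4) ∧ (ofLex (s (z c d)).1).2 = true ∧
        (ofLex (s (z c d)).2).2 = false}.Countable := h2
    refine (h1'.union h2').mono ?_
    rintro d ⟨hd, hne⟩
    rcases Bool.eq_false_or_eq_true ((ofLex (s (z c d)).1).2) with hfd | hfd <;>
      rcases Bool.eq_false_or_eq_true ((ofLex (s (z c d)).2).2) with hgd | hgd
    · exact absurd (hfd.trans hgd.symm) hne
    · exact Or.inr ⟨hd, hfd, hgd⟩
    · exact Or.inl ⟨hd, hfd, hgd⟩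
    · exact absurd (hfd.trans hgd.symm) hne
  -- column claim : along lines of slope -1, equal boolean patterns are countable
  have hcol : ∀ d ∈ Icc (1/2:ℝ) (3/4),
      {c | c ∈ Icc (0:ℝ) (1/4) ∧
        (ofLex (s (z c d)).1).2 = (ofLex (s (z c d)).2).2}.Countable := by
    intro d hd
    have hγ : Measurable (fun c => z c d) := by
      simp only [hz]
      exact (measurable_pt.comp ((measurable_const.sub measurable_id).div_const 2)).prodMk
        (measurable_pt.comp ((measurable_const.add measurable_id).div_const 2))
    have h1 := core_countable s hsel hmeas (fun c => z c d) hγ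
      (Icc (0:ℝ) (1/4)) measurableSet_Icc false false
      (by
        intro t ht t' ht' hne
        simp only [Bool.cond_false]
        rw [hcoe1 t ht d hd, hcoe1 t' ht' d hd, hcoe2 t ht d hd, hcoe2 t' ht' d hd]
        rintro ⟨h1, h2⟩; linarith)
      (by
        intro t ht t' ht' hne
        rw [hcoe1 t ht d hd, hcoe1 t' ht' d hd]
        intro h; exact hne (by linarith))
      (by
        intro t ht t' ht' hne
        rw [hcoe2 t ht d hd, hcoe2 t' ht' d hd]
        intro h; exact hne (by linarith))
    have h2 := core_countable s hsel hmeas (fun c => z c d) hγ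
      (Icc (0:ℝ) (1/4)) measurableSet_Icc true true
      (by
        intro t ht t' ht' hne
        simp only [Bool.cond_true]
        rw [hcoe1 t ht d hd, hcoe1 t' ht' d hd, hcoe2 t ht d hd, hcoe2 t' ht' d hd]
        rintro ⟨h1, h2⟩; linarith)
      (by
        intro t ht t' ht' hne
        rw [hcoe1 t ht d hd, hcoe1 t' ht' d hd]
        intro h; exact hne (by linarith))
      (by
        intro t ht t' ht' hne
        rw [hcoe2 t ht d hd, hcoe2 t' ht' d hd]
        intro h; exact hne (by linarith))
    have h1' : {c | c ∈ Icc (0:ℝ) (1/4) ∧ (ofLex (s (z c d)).1).2 = false ∧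
        (ofLex (s (z c d)).2).2 = false}.Countable := h1
    have h2' : {c | c ∈ Icc (0:ℝ) (1/4) ∧ (ofLex (s (z c d)).1).2 = true ∧
        (ofLex (s (z c d)).2).2 = true}.Countable := h2
    refine (h1'.union h2').mono ?_
    rintro c ⟨hcI, heq⟩
    rcases Bool.eq_false_or_eq_true ((ofLex (s (z c d)).1).2) with hfd | hfd
    · exact Or.inr ⟨hcI, hfd, heq.symm.trans hfd⟩
    · exact Or.inl ⟨hcI, hfd, heq.symm.trans hfd⟩
  -- Sierpiński grid argument
  have hK : ∃ K : Set ℝ, K ⊆ Icc (0:ℝ) (1/4) ∧ #K = Cardinal.aleph 1 := by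
    have h1 : (Cardinal.aleph 1 : Cardinal.{0}) ≤ #(Icc (0:ℝ) (1/4)) := by
      rw [mk_Icc_real (by norm_num : (0:ℝ) < 1/4)]; exact hch0.le
    obtain ⟨p, hp⟩ := Cardinal.le_mk_iff_exists_set.mp h1
    refine ⟨Subtype.val '' p, Subtype.coe_image_subset _ _, ?_⟩
    rw [Cardinal.mk_image_eq Subtype.val_injective, hp]
  obtain ⟨K, hKsub, hKcard⟩ := hK
  set N : Set ℝ := ⋃ c ∈ K, {d | d ∈ Icc (1/2:ℝ) (3/4) ∧
    (ofLex (s (z c d)).1).2 ≠ (ofLex (s (z c d)).2).2} with hN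
  have hNcard : #N < 𝔠 := by
    have h1 := Cardinal.mk_biUnion_le (fun c => {d | d ∈ Icc (1/2:ℝ) (3/4) ∧
      (ofLex (s (z c d)).1).2 ≠ (ofLex (s (z c d)).2).2}) K
    have h2 : (⨆ c : K, #({d | d ∈ Icc (1/2:ℝ) (3/4) ∧
        (ofLex (s (z c.1 d)).1).2 ≠ (ofLex (s (z c.1 d)).2).2})) ≤ ℵ₀ := by
      refine ciSup_le' fun c => ?_
      exact Cardinal.mk_le_aleph0_iff.mpr (Set.countable_coe_iff.mpr (hrow c.1 (hKsub c.2)))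
    calc #N ≤ #K * _ := h1
      _ ≤ #K * ℵ₀ := mul_le_mul_right h2 _
      _ = Cardinal.aleph 1 * ℵ₀ := by rw [hKcard]
      _ = Cardinal.aleph 1 := by
          rw [Cardinal.mul_eq_max (Cardinal.aleph0_le_aleph 1) le_rfl]
          exact max_eq_left (Cardinal.aleph0_le_aleph 1)
      _ < 𝔠 := hch0
  have hnotsub : ¬ (Icc (1/2:ℝ) (3/4) ⊆ N) := by
    intro hsub
    have h3 := Cardinal.mk_le_mk_of_subset hsub
    rw [mk_Icc_real (by norm_num : (1/2:ℝ) < 3/4)] at h3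
    exact absurd (h3.trans_lt hNcard) (lt_irrefl _)
  obtain ⟨d, hdM, hdN⟩ := not_subset.mp hnotsub
  have hKcol : K ⊆ {c | c ∈ Icc (0:ℝ) (1/4) ∧
      (ofLex (s (z c d)).1).2 = (ofLex (s (z c d)).2).2} := by
    intro c hcK
    refine ⟨hKsub hcK, ?_⟩
    by_contra hne
    exact hdN (Set.mem_biUnion hcK ⟨hdM, hne⟩)
  have h4 := Cardinal.mk_le_mk_of_subset hKcol
  rw [hKcard] at h4
  have h5 : (Cardinal.aleph 1 : Cardinal.{0}) ≤ ℵ₀ :=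
    h4.trans (Cardinal.mk_le_aleph0_iff.mpr (Set.countable_coe_iff.mpr (hcol d hdM)))
  exact absurd h5 (Cardinal.aleph0_lt_aleph_one).not_ge
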